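/- Let r ≥ 1, let T be a heavy family of r-element subsets of [n], and let H = ↓T. Writing H_k = H ∩ L_k for the sets of size k in H, for every k with 0 ≤ k ≤ r − 1 we have (2(r − k) − 1)·|H_k| ≤ (k + 1)·|H_{k+1}|. -/

import Mathlib

open scoped Classical

/-- The width of a finite family of finite sets: the maximum size of an
antichain (under inclusion) contained in the family. -/
noncomputable def width (F : Finset (Finset ℕ)) : ℕ :=
  (F.powerset.filter (fun A => ∀ x ∈ A, ∀ y ∈ A, x ≠ y → ¬ x ⊆ y)).sup Finset.card

/-- The downset generated by a family of finite sets. -/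
def downGen (T : Finset (Finset ℕ)) : Finset (Finset ℕ) :=
  T.biUnion Finset.powerset

lemma mem_downGen {T : Finset (Finset ℕ)} {A : Finset ℕ} :
    A ∈ downGen T ↔ ∃ C ∈ T, A ⊆ C := by
  simp [downGen]

lemma sum_card_filter_comm (s t : Finset (Finset ℕ)) :
    ∑ a ∈ s, (t.filter (fun b => a ⊆ b)).card
      = ∑ b ∈ t, (s.filter (fun a => a ⊆ b)).card := by
  simp only [Finset.card_filter]
  exact Finset.sum_comm

lemma deg_lower (r k : ℕ) (T : Finset (Finset ℕ))
    (hTr : ∀ A ∈ T, A.card = r)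
    (heavy : width (downGen T) ≤ T.card)
    (hk : k < r) {A : Finset ℕ} (hA : A ∈ downGen T) (hAk : A.card = k) :
    2 * (r - k) - 1 ≤ ((downGen T).filter (fun B => B.card = k + 1 ∧ A ⊆ B)).card := by
  classical
  set m := r - k with hmdef
  have hm1 : 1 ≤ m := by omega
  have hrkm : r = k + m := by omega
  set TA := T.filter (fun C => A ⊆ C) with hTAdef
  have hmemTA : ∀ C ∈ TA, C ∈ T ∧ A ⊆ C := by
    intro C hC; simpa [hTAdef] using hC
  obtain ⟨C0, hC0T, hAC0⟩ := mem_downGen.1 hA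
  have hTAne : TA.Nonempty := ⟨C0, by simp [hTAdef, hC0T, hAC0]⟩
  set L := TA.image (fun C => C \ A) with hLdef
  have hLcard : L.card = TA.card := by
    rw [hLdef]
    apply Finset.card_image_of_injOn
    intro C1 h1 C2 h2 h12
    dsimp only at h12
    have hA1 := (hmemTA C1 h1).2
    have hA2 := (hmemTA C2 h2).2
    calc C1 = A ∪ C1 \ A := (Finset.union_sdiff_of_subset hA1).symm
      _ = A ∪ C2 \ A := by rw [h12]
      _ = C2 := Finset.union_sdiff_of_subset hA2
  have hLprop : ∀ D ∈ L, D.card = m ∧ Disjoint A D ∧ ∃ C ∈ T, A ⊆ C ∧ D = C \ A := by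
    intro D hD
    obtain ⟨C, hC, rfl⟩ := Finset.mem_image.1 hD
    obtain ⟨hCT, hAC⟩ := hmemTA C hC
    refine ⟨?_, Finset.disjoint_sdiff, C, hCT, hAC, rfl⟩
    rw [Finset.card_sdiff_of_subset hAC, hTr C hCT, hAk]
  set U := L.biUnion id with hUdef
  have hLU : ∀ D ∈ L, D ⊆ U := by
    intro D hD x hx
    exact Finset.mem_biUnion.2 ⟨D, hD, hx⟩
  set d := U.card with hddef
  have hAU : Disjoint A U := by
    rw [hUdef, Finset.disjoint_biUnion_right]
    intro D hD
    exact (hLprop D hD).2.1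
  set S := L.biUnion (fun D => D.powersetCard (m - 1)) with hSdef
  have hSprop : ∀ D' ∈ S, D'.card = m - 1 ∧ D' ⊆ U ∧ ∃ D ∈ L, D' ⊆ D := by
    intro D' hD'
    obtain ⟨D, hD, hD'D⟩ := Finset.mem_biUnion.1 hD'
    obtain ⟨hsub, hcard⟩ := Finset.mem_powersetCard.1 hD'D
    exact ⟨hcard, hsub.trans (hLU D hD), D, hD, hsub⟩
  -- heaviness: |S| ≤ |TA|
  set S' := S.image (fun D' => A ∪ D') with hS'def
  have hAS : ∀ D' ∈ S, Disjoint A D' := by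
    intro D' hD'
    exact Finset.disjoint_of_subset_right (hSprop D' hD').2.1 hAU
  have hcancel : ∀ D' ∈ S, (A ∪ D') \ A = D' := by
    intro D' hD'
    have hdj := hAS D' hD'
    rw [Finset.union_sdiff_cancel_left hdj]
  have hS'card : S'.card = S.card := by
    rw [hS'def]
    apply Finset.card_image_of_injOn
    intro x hx y hy hxy
    dsimp only at hxy
    rw [← hcancel x hx, ← hcancel y hy, hxy]
  have hS'c : ∀ B ∈ S', B.card = k + (m - 1) ∧ A ⊆ B ∧ B ∈ downGen T := by
    intro B hB
    obtain ⟨D', hD', rfl⟩ := Finset.mem_image.1 hB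
    obtain ⟨hc, hU', D, hD, hD'D⟩ := hSprop D' hD'
    obtain ⟨Dc, hDc, _, _⟩ := hLprop D hD
    obtain ⟨C, hCT, hAC, rfl⟩ := (hLprop D hD).2.2
    refine ⟨?_, Finset.subset_union_left, ?_⟩
    · rw [Finset.card_union_of_disjoint (hAS D' hD'), hAk, hc]
    · exact mem_downGen.2 ⟨C, hCT, Finset.union_subset hAC
        (hD'D.trans (Finset.sdiff_subset))⟩
  have hTAsub : TA ⊆ T := Finset.filter_subset _ _
  have hTAle : TA.card ≤ T.card := Finset.card_le_card hTAsub
  have hTcardmem : ∀ C ∈ T \ TA, C.card = r ∧ ¬ A ⊆ C := by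
    intro C hC
    obtain ⟨hCT, hCnTA⟩ := Finset.mem_sdiff.1 hC
    refine ⟨hTr C hCT, fun hsub => hCnTA ?_⟩
    rw [hTAdef]; exact Finset.mem_filter.2 ⟨hCT, hsub⟩
  have hWdisj : Disjoint (T \ TA) S' := by
    rw [Finset.disjoint_left]
    intro x hx hx'
    have h1 := (hTcardmem x hx).1
    have h2 := (hS'c x hx').1
    omega
  have hWsub : (T \ TA) ∪ S' ⊆ downGen T := by
    intro x hx
    rcases Finset.mem_union.1 hx with hx | hx
    · exact mem_downGen.2 ⟨x, (Finset.mem_sdiff.1 hx).1, subset_rfl⟩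
    · exact (hS'c x hx).2.2
  have hWanti : ∀ x ∈ (T \ TA) ∪ S', ∀ y ∈ (T \ TA) ∪ S', x ≠ y → ¬ x ⊆ y := by
    intro x hx y hy hxy hsub
    rcases Finset.mem_union.1 hx with hx | hx <;> rcases Finset.mem_union.1 hy with hy | hy
    · exact hxy (Finset.eq_of_subset_of_card_le hsub
        (by rw [(hTcardmem x hx).1, (hTcardmem y hy).1]))
    · have := Finset.card_le_card hsub
      have h1 := (hTcardmem x hx).1
      have h2 := (hS'c y hy).1
      omega
    · exact (hTcardmem y hy).2 ((hS'c x hx).2.1.trans hsub)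
    · exact hxy (Finset.eq_of_subset_of_card_le hsub
        (by rw [(hS'c x hx).1, (hS'c y hy).1]))
  have hWwidth : ((T \ TA) ∪ S').card ≤ T.card := by
    refine le_trans ?_ heavy
    exact Finset.le_sup (Finset.mem_filter.2 ⟨Finset.mem_powerset.2 hWsub, hWanti⟩)
  have hWcard : ((T \ TA) ∪ S').card = (T.card - TA.card) + S.card := by
    rw [Finset.card_union_of_disjoint hWdisj, Finset.card_sdiff_of_subset hTAsub, hS'card]
  have hSle : S.card ≤ TA.card := by omega
  -- double counting: m * |L| ≤ ∑_{D∈L} |S.filter (· ⊆ D)| = ∑_{D'∈S} |L.filter (D' ⊆ ·)|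
  have hcount1 : L.card * m ≤ ∑ D ∈ L, (S.filter (fun D' => D' ⊆ D)).card := by
    have := Finset.card_nsmul_le_sum L (fun D => (S.filter (fun D' => D' ⊆ D)).card) m ?_
    · simpa [smul_eq_mul] using this
    · intro D hD
      have hsub : D.powersetCard (m - 1) ⊆ S.filter (fun D' => D' ⊆ D) := by
        intro D' hD'
        refine Finset.mem_filter.2 ⟨Finset.mem_biUnion.2 ⟨D, hD, hD'⟩,
          (Finset.mem_powersetCard.1 hD').1⟩
      have hpc : (D.powersetCard (m - 1)).card = m := by
        rw [Finset.card_powersetCard, (hLprop D hD).1]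
        have h := Nat.choose_symm (n := m) (k := 1) hm1
        rw [h, Nat.choose_one_right]
      calc m = (D.powersetCard (m - 1)).card := hpc.symm
        _ ≤ _ := Finset.card_le_card hsub
  have hcount2 : ∑ D ∈ L, (S.filter (fun D' => D' ⊆ D)).card
      = ∑ D' ∈ S, (L.filter (fun D => D' ⊆ D)).card :=
    (sum_card_filter_comm S L).symm
  have hcount3 : ∀ D' ∈ S, (L.filter (fun D => D' ⊆ D)).card ≤ d - (m - 1) := by
    intro D' hD'
    obtain ⟨hc, hUsub, _⟩ := hSprop D' hD'
    have hinj : (L.filter (fun D => D' ⊆ D)).card ≤ ((U \ D').powersetCard 1).card := by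
      apply Finset.card_le_card_of_injOn (fun D => D \ D')
      · intro D hD
        obtain ⟨hDL, hD'D⟩ := Finset.mem_filter.1 hD
        refine Finset.mem_powersetCard.2 ⟨?_, ?_⟩
        · intro x hx
          obtain ⟨hxD, hxD'⟩ := Finset.mem_sdiff.1 hx
          exact Finset.mem_sdiff.2 ⟨hLU D hDL hxD, hxD'⟩
        · rw [Finset.card_sdiff_of_subset hD'D, (hLprop D hDL).1, hc]
          omega
      · intro x hx y hy hxy
        dsimp only at hxy
        have hx' := (Finset.mem_filter.1 hx).2
        have hy' := (Finset.mem_filter.1 hy).2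
        calc x = D' ∪ x \ D' := (Finset.union_sdiff_of_subset hx').symm
          _ = D' ∪ y \ D' := by rw [hxy]
          _ = y := Finset.union_sdiff_of_subset hy'
    calc (L.filter (fun D => D' ⊆ D)).card ≤ ((U \ D').powersetCard 1).card := hinj
      _ = (U \ D').card.choose 1 := Finset.card_powersetCard _ _
      _ = (U \ D').card := Nat.choose_one_right _
      _ = d - (m - 1) := by rw [Finset.card_sdiff_of_subset hUsub, hc]
  have hcount4 : ∑ D' ∈ S, (L.filter (fun D => D' ⊆ D)).card ≤ S.card * (d - (m - 1)) := by
    have := Finset.sum_le_card_nsmul S (fun D' => (L.filter (fun D => D' ⊆ D)).card)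
      (d - (m - 1)) hcount3
    simpa [smul_eq_mul] using this
  have hmain : TA.card * m ≤ TA.card * (d - (m - 1)) := by
    calc TA.card * m = L.card * m := by rw [hLcard]
      _ ≤ ∑ D ∈ L, (S.filter (fun D' => D' ⊆ D)).card := hcount1
      _ = ∑ D' ∈ S, (L.filter (fun D => D' ⊆ D)).card := hcount2
      _ ≤ S.card * (d - (m - 1)) := hcount4
      _ ≤ TA.card * (d - (m - 1)) := Nat.mul_le_mul_right _ hSle
  have hTApos : 0 < TA.card := Finset.card_pos.2 hTAne
  have hd2m : 2 * m - 1 ≤ d := by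
    have hmd : m ≤ d - (m - 1) := Nat.le_of_mul_le_mul_left hmain hTApos
    omega
  -- finally, d ≤ number of (k+1)-sets above A in downGen T
  have hfinal : d ≤ ((downGen T).filter (fun B => B.card = k + 1 ∧ A ⊆ B)).card := by
    apply Finset.card_le_card_of_injOn (fun x => insert x A)
    · intro x hx
      obtain ⟨D, hD, hxD⟩ := Finset.mem_biUnion.1 hx
      obtain ⟨C, hCT, hAC, hDC⟩ := (hLprop D hD).2.2
      have hxA : x ∉ A := Finset.disjoint_right.1 hAU hx
      have hxC : x ∈ C := by
        have : (x : ℕ) ∈ C \ A := hDC ▸ hxD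
        exact (Finset.mem_sdiff.1 this).1
      refine Finset.mem_filter.2 ⟨mem_downGen.2 ⟨C, hCT, Finset.insert_subset hxC hAC⟩,
        ?_, Finset.subset_insert _ _⟩
      rw [Finset.card_insert_of_notMem hxA, hAk]
    · intro x hx y hy hxy
      dsimp only at hxy
      have hxA : x ∉ A := Finset.disjoint_right.1 hAU hx
      have hyA : y ∉ A := Finset.disjoint_right.1 hAU hy
      have : x ∈ insert y A := by rw [← hxy]; exact Finset.mem_insert_self _ _
      rcases Finset.mem_insert.1 this with h | h
      · exact h
      · exact absurd h hxA
  omega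

/-- In the downset `H` generated by a heavy family of `r`-sets, for every
`0 ≤ k ≤ r - 1` the level sizes satisfy `(2(r-k)-1)·|H_k| ≤ (k+1)·|H_{k+1}|`. -/
theorem heavy_level_inequality (n r k : ℕ) (hr : 1 ≤ r) (T : Finset (Finset ℕ))
    (hT : ∀ A ∈ T, A ⊆ Finset.Icc 1 n)
    (hTr : ∀ A ∈ T, A.card = r)
    (heavy : width (downGen T) ≤ T.card)
    (hk : k ≤ r - 1) :
    (2 * (r - k) - 1) * ((downGen T).filter (fun A => A.card = k)).card ≤
      (k + 1) * ((downGen T).filter (fun A => A.card = k + 1)).card := by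
  classical
  have hkr : k < r := by omega
  set Hk := (downGen T).filter (fun A => A.card = k) with hHk
  set Hk1 := (downGen T).filter (fun A => A.card = k + 1) with hHk1
  have step1 : (2 * (r - k) - 1) * Hk.card
      ≤ ∑ A ∈ Hk, (Hk1.filter (fun B => A ⊆ B)).card := by
    rw [mul_comm]
    have h := Finset.card_nsmul_le_sum Hk
      (fun A => (Hk1.filter (fun B => A ⊆ B)).card) (2 * (r - k) - 1) ?_
    · simpa [smul_eq_mul] using h
    · intro A hA
      obtain ⟨hAH, hAk⟩ := Finset.mem_filter.1 hA
      have hdeg := deg_lower r k T hTr heavy hkr hAH hAk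
      have heq : Hk1.filter (fun B => A ⊆ B)
          = (downGen T).filter (fun B => B.card = k + 1 ∧ A ⊆ B) := by
        rw [hHk1, Finset.filter_filter]
      rw [heq]
      exact hdeg
  have step2 : ∑ A ∈ Hk, (Hk1.filter (fun B => A ⊆ B)).card
      = ∑ B ∈ Hk1, (Hk.filter (fun A => A ⊆ B)).card := sum_card_filter_comm _ _
  have step3 : ∑ B ∈ Hk1, (Hk.filter (fun A => A ⊆ B)).card ≤ Hk1.card * (k + 1) := by
    have h := Finset.sum_le_card_nsmul Hk1
      (fun B => (Hk.filter (fun A => A ⊆ B)).card) (k + 1) ?_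
    · simpa [smul_eq_mul] using h
    · intro B hB
      have hBc : B.card = k + 1 := (Finset.mem_filter.1 hB).2
      have hsub : Hk.filter (fun A => A ⊆ B) ⊆ B.powersetCard k := by
        intro A hA
        obtain ⟨hA1, hA2⟩ := Finset.mem_filter.1 hA
        exact Finset.mem_powersetCard.2 ⟨hA2, (Finset.mem_filter.1 hA1).2⟩
      calc (Hk.filter (fun A => A ⊆ B)).card ≤ (B.powersetCard k).card :=
            Finset.card_le_card hsub
        _ = (k + 1).choose k := by rw [Finset.card_powersetCard, hBc]
        _ = k + 1 := by
            have h1 : (k+1).choose ((k+1) - k) = (k+1).choose k :=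
              Nat.choose_symm (Nat.le_succ k)
            have h2 : (k+1) - k = 1 := by omega
            rw [h2] at h1
            rw [← h1, Nat.choose_one_right]
  calc (2 * (r - k) - 1) * Hk.card ≤ _ := step1
    _ = _ := step2
    _ ≤ Hk1.card * (k + 1) := step3
    _ = (k + 1) * Hk1.card := mul_comm _ _
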